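/- For every k ≥ 5, the directed circuit Ck has a graceful difference labeling in which exactly one arc has magnitude 1 (i.e., exactly one arc uv satisfies |f(v)-f(u)| = 1). -/

import Mathlib

/-- Cyclic successor on `Fin k`. -/
def cyc (k : ℕ) (hk : 0 < k) (i : Fin k) : Fin k := ⟨(i.val + 1) % k, Nat.mod_lt _ hk⟩

/-- `f` is a graceful difference labeling of the digraph with arc set `A`:
`f` is a bijection from the vertices onto `{1,…,|V|}` and the arc labels
`f v - f u` are pairwise distinct. -/
def IsGdlOn {V : Type} [Fintype V] (A : Set (V × V)) (f : V → ℤ) : Prop :=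
  Set.BijOn f Set.univ (Set.Icc 1 (Fintype.card V : ℤ)) ∧
  Set.InjOn (fun a : V × V => f a.2 - f a.1) A

/-- Arc set of the directed circuit on `Fin k`. -/
def circuitArcs (k : ℕ) (hk : 0 < k) : Set (Fin k × Fin k) :=
  Set.range (fun i => (i, cyc k hk i))

/-- Builder: reduce the theorem to arithmetic facts about a labeling `F : ℕ → ℕ`. -/
lemma build {k : ℕ} (hk5 : 5 ≤ k) (F : ℕ → ℕ)
    (hmem : ∀ i, i < k → 1 ≤ F i ∧ F i ≤ k)
    (hinj : ∀ i j, i < k → j < k → F i = F j → i = j)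
    (hdinj : ∀ i j, i < k → j < k →
      (F ((i+1)%k) : ℤ) - F i = (F ((j+1)%k) : ℤ) - F j → i = j)
    (w : ℕ) (hwlt : w < k)
    (hw1 : (F ((w+1)%k) : ℤ) - F w = 1 ∨ (F ((w+1)%k) : ℤ) - F w = -1)
    (huniq : ∀ j, j < k → |(F ((j+1)%k) : ℤ) - F j| = 1 → j = w) :
    ∃ f : Fin k → ℤ, IsGdlOn (circuitArcs k (Nat.lt_of_lt_of_le (Nat.succ_pos 4) hk5)) f ∧
      ∃! i : Fin k, |f (cyc k (Nat.lt_of_lt_of_le (Nat.succ_pos 4) hk5) i) - f i| = 1 := by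
  refine ⟨fun i => (F i.val : ℤ), ⟨⟨?_, ?_, ?_⟩, ?_⟩, ?_⟩
  · intro x _
    have := hmem x.1 x.2
    simp only [Set.mem_Icc, Fintype.card_fin]
    omega
  · intro a _ b _ h
    exact Fin.ext (hinj a.1 b.1 a.2 b.2 (Nat.cast_injective (R := ℤ) h))
  · -- SurjOn via cardinality
    have hinj' : Set.InjOn (fun i : Fin k => (F i.val : ℤ)) Set.univ := by
      intro a _ b _ h
      exact Fin.ext (hinj a.1 b.1 a.2 b.2 (Nat.cast_injective (R := ℤ) h))
    have hsub : (fun i : Fin k => (F i.val : ℤ)) '' Set.univ ⊆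
        Set.Icc 1 (Fintype.card (Fin k) : ℤ) := by
      rintro y ⟨x, -, rfl⟩
      have := hmem x.1 x.2
      simp only [Set.mem_Icc, Fintype.card_fin]
      omega
    have hcard : ((fun i : Fin k => (F i.val : ℤ)) '' Set.univ).ncard = k := by
      rw [Set.ncard_image_of_injOn hinj', Set.ncard_univ, Nat.card_eq_fintype_card,
        Fintype.card_fin]
    have hicc : (Set.Icc 1 (Fintype.card (Fin k) : ℤ)).ncard = k := by
      rw [Fintype.card_fin, ← Finset.coe_Icc, Set.ncard_coe_finset, Int.card_Icc]
      omega
    have heq : (fun i : Fin k => (F i.val : ℤ)) '' Set.univ =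
        Set.Icc 1 (Fintype.card (Fin k) : ℤ) :=
      Set.eq_of_subset_of_ncard_le hsub (by omega) (Set.finite_Icc _ _)
    intro y hy
    rw [← heq] at hy
    exact hy
  · rintro a ⟨i, rfl⟩ b ⟨j, rfl⟩ h
    simp only at h
    have : i.1 = j.1 := hdinj i.1 j.1 i.2 j.2 h
    have : i = j := Fin.ext this
    rw [this]
  · refine ⟨⟨w, hwlt⟩, ?_, ?_⟩
    · show |(F ((w+1)%k) : ℤ) - F w| = 1
      rcases hw1 with h | h <;> rw [h] <;> norm_num
    · intro y hy
      exact Fin.ext (huniq y.1 y.2 hy)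

/-- Labeling for `k % 4 ∈ {1, 2}`: the plain zigzag `1, k, 2, k-1, …`. -/
def FA (k i : ℕ) : ℕ := if i % 2 = 0 then i/2 + 1 else k - (i-1)/2

/-- Labeling for `k % 4 ∈ {0, 3}`: a modified zigzag. -/
def FB (k i : ℕ) : ℕ :=
  if i = 0 then 1 else if i = 1 then k else if i = k-2 then 2 else if i = k-1 then k-1
  else if i % 2 = 0 then i/2 + 2 else k - 1 - (i-1)/2

/-- Value clauses for `FA`. -/
lemma vA (k i : ℕ) (hk : 5 ≤ k) (hi : i < k) :
    (i % 2 = 0 ∧ 2 * FA k i = i + 2) ∨ (i % 2 = 1 ∧ 2 * FA k i + i = 2 * k + 1) := by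
  rcases Nat.mod_two_eq_zero_or_one i with hp | hp
  · exact Or.inl ⟨hp, by unfold FA; rw [if_pos hp]; omega⟩
  · exact Or.inr ⟨hp, by unfold FA; rw [if_neg (by omega)]; omega⟩

/-- Value clauses for `FB`. -/
lemma vB (k i : ℕ) (hk : 5 ≤ k) (hi : i < k) :
    (i = 0 ∧ FB k i = 1) ∨ (i = 1 ∧ FB k i = k) ∨
    (i = k-2 ∧ FB k i = 2) ∨ (i = k-1 ∧ FB k i = k-1) ∨
    (2 ≤ i ∧ i ≤ k-3 ∧ i ≠ k-2 ∧ i % 2 = 0 ∧ 2 * FB k i = i + 4) ∨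
    (2 ≤ i ∧ i ≤ k-3 ∧ i ≠ k-2 ∧ i % 2 = 1 ∧ 2 * FB k i + i = 2 * k - 1) := by
  by_cases c0 : i = 0
  · exact Or.inl ⟨c0, by unfold FB; rw [if_pos c0]⟩
  by_cases c1 : i = 1
  · refine Or.inr (Or.inl ⟨c1, ?_⟩)
    unfold FB; rw [if_neg c0, if_pos c1]
  by_cases c2 : i = k-2
  · refine Or.inr (Or.inr (Or.inl ⟨c2, ?_⟩))
    unfold FB; rw [if_neg c0, if_neg c1, if_pos c2]
  by_cases c3 : i = k-1
  · refine Or.inr (Or.inr (Or.inr (Or.inl ⟨c3, ?_⟩)))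
    unfold FB; rw [if_neg c0, if_neg c1, if_neg c2, if_pos c3]
  rcases Nat.mod_two_eq_zero_or_one i with hp | hp
  · refine Or.inr (Or.inr (Or.inr (Or.inr (Or.inl ⟨by omega, by omega, c2, hp, ?_⟩))))
    unfold FB; rw [if_neg c0, if_neg c1, if_neg c2, if_neg c3, if_pos hp]; omega
  · refine Or.inr (Or.inr (Or.inr (Or.inr (Or.inr ⟨by omega, by omega, c2, hp, ?_⟩))))
    unfold FB; rw [if_neg c0, if_neg c1, if_neg c2, if_neg c3, if_neg (by omega)]; omega

lemma hmod {k : ℕ} (hk : 0 < k) (i : ℕ) (hi : i < k) :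
    (i + 1) % k = if i = k - 1 then 0 else i + 1 := by
  split_ifs with h
  · rw [show i + 1 = k by omega, Nat.mod_self]
  · exact Nat.mod_eq_of_lt (by omega)

/-- Arc-difference clauses for `FA`. -/
lemma dA (k : ℕ) (hk : 5 ≤ k) (i : ℕ) (hi : i < k) :
    (i ≤ k - 2 ∧ i % 2 = 0 ∧ (FA k ((i+1)%k) : ℤ) - FA k i = k - 1 - i) ∨
    (i ≤ k - 2 ∧ i % 2 = 1 ∧ (FA k ((i+1)%k) : ℤ) - FA k i = i + 1 - k) ∨
    (i = k - 1 ∧ k % 2 = 1 ∧ 2 * ((FA k ((i+1)%k) : ℤ) - FA k i) = 1 - k) ∨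
    (i = k - 1 ∧ k % 2 = 0 ∧ 2 * ((FA k ((i+1)%k) : ℤ) - FA k i) = -k) := by
  rw [hmod (by omega) i hi]
  by_cases ci : i = k - 1
  · rw [if_pos ci]
    have h1 := vA k 0 hk (by omega)
    have h2 := vA k i hk hi
    rcases Nat.mod_two_eq_zero_or_one k with hp | hp
    · refine Or.inr (Or.inr (Or.inr ⟨ci, hp, ?_⟩))
      rcases h1 with h1|h1 <;> rcases h2 with h2|h2 <;> omega
    · refine Or.inr (Or.inr (Or.inl ⟨ci, hp, ?_⟩))
      rcases h1 with h1|h1 <;> rcases h2 with h2|h2 <;> omega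
  · rw [if_neg ci]
    have h1 := vA k i hk hi
    have h2 := vA k (i+1) hk (by omega)
    rcases Nat.mod_two_eq_zero_or_one i with hp | hp
    · refine Or.inl ⟨by omega, hp, ?_⟩
      rcases h1 with h1|h1 <;> rcases h2 with h2|h2 <;> omega
    · refine Or.inr (Or.inl ⟨by omega, hp, ?_⟩)
      rcases h1 with h1|h1 <;> rcases h2 with h2|h2 <;> omega

/-- Arc-difference clauses for `FB`. -/
lemma dB (k : ℕ) (hk : 5 ≤ k) (i : ℕ) (hi : i < k) :
    (i = 0 ∧ (FB k ((i+1)%k) : ℤ) - FB k i = k - 1) ∨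
    (i = 1 ∧ (FB k ((i+1)%k) : ℤ) - FB k i = 3 - k) ∨
    (2 ≤ i ∧ i ≤ k - 4 ∧ i ≠ k - 3 ∧ i % 2 = 0 ∧
      (FB k ((i+1)%k) : ℤ) - FB k i = k - 3 - i) ∨
    (3 ≤ i ∧ i ≤ k - 4 ∧ i ≠ k - 3 ∧ i % 2 = 1 ∧
      (FB k ((i+1)%k) : ℤ) - FB k i = i + 3 - k) ∨
    (i = k - 3 ∧ k % 2 = 1 ∧ 2 * ((FB k ((i+1)%k) : ℤ) - FB k i) = 3 - k) ∨
    (i = k - 3 ∧ k % 2 = 0 ∧ 2 * ((FB k ((i+1)%k) : ℤ) - FB k i) = 2 - k) ∨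
    (i = k - 2 ∧ (FB k ((i+1)%k) : ℤ) - FB k i = k - 3) ∨
    (i = k - 1 ∧ (FB k ((i+1)%k) : ℤ) - FB k i = 2 - k) := by
  rw [hmod (by omega) i hi]
  by_cases ci : i = k - 1
  · rw [if_pos ci]
    have h1 := vB k 0 hk (by omega)
    have h2 := vB k i hk hi
    rcases h1 with h1|h1|h1|h1|h1|h1 <;> rcases h2 with h2|h2|h2|h2|h2|h2 <;>
      refine Or.inr (Or.inr (Or.inr (Or.inr (Or.inr (Or.inr (Or.inr ⟨ci, ?_⟩)))))) <;>
      omega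
  · rw [if_neg ci]
    have h1 := vB k i hk hi
    have h2 := vB k (i+1) hk (by omega)
    by_cases c0 : i = 0
    · refine Or.inl ⟨c0, ?_⟩
      rcases h1 with h1|h1|h1|h1|h1|h1 <;> rcases h2 with h2|h2|h2|h2|h2|h2 <;> omega
    by_cases c1 : i = 1
    · refine Or.inr (Or.inl ⟨c1, ?_⟩)
      rcases h1 with h1|h1|h1|h1|h1|h1 <;> rcases h2 with h2|h2|h2|h2|h2|h2 <;> omega
    by_cases c2 : i = k - 3
    · rcases Nat.mod_two_eq_zero_or_one k with hp | hp
      · refine Or.inr (Or.inr (Or.inr (Or.inr (Or.inr (Or.inl ⟨c2, hp, ?_⟩)))))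
        rcases h1 with h1|h1|h1|h1|h1|h1 <;> rcases h2 with h2|h2|h2|h2|h2|h2 <;> omega
      · refine Or.inr (Or.inr (Or.inr (Or.inr (Or.inl ⟨c2, hp, ?_⟩))))
        rcases h1 with h1|h1|h1|h1|h1|h1 <;> rcases h2 with h2|h2|h2|h2|h2|h2 <;> omega
    by_cases c3 : i = k - 2
    · refine Or.inr (Or.inr (Or.inr (Or.inr (Or.inr (Or.inr (Or.inl ⟨c3, ?_⟩))))))
      rcases h1 with h1|h1|h1|h1|h1|h1 <;> rcases h2 with h2|h2|h2|h2|h2|h2 <;> omega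
    rcases Nat.mod_two_eq_zero_or_one i with hp | hp
    · refine Or.inr (Or.inr (Or.inl ⟨by omega, by omega, c2, hp, ?_⟩))
      rcases h1 with h1|h1|h1|h1|h1|h1 <;> rcases h2 with h2|h2|h2|h2|h2|h2 <;> omega
    · refine Or.inr (Or.inr (Or.inr (Or.inl ⟨by omega, by omega, c2, hp, ?_⟩)))
      rcases h1 with h1|h1|h1|h1|h1|h1 <;> rcases h2 with h2|h2|h2|h2|h2|h2 <;> omega

set_option maxHeartbeats 1000000 in
lemma caseA (k : ℕ) (hk : 5 ≤ k) (hA : k % 4 = 1 ∨ k % 4 = 2) :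
    ∃ f : Fin k → ℤ, IsGdlOn (circuitArcs k (Nat.lt_of_lt_of_le (Nat.succ_pos 4) hk)) f ∧
      ∃! i : Fin k, |f (cyc k (Nat.lt_of_lt_of_le (Nat.succ_pos 4) hk) i) - f i| = 1 := by
  refine build hk (FA k) ?_ ?_ ?_ (k - 2) (by omega) ?_ ?_
  · intro i hi
    have h1 := vA k i hk hi
    rcases h1 with h1|h1 <;> omega
  · intro i j hi hj h
    have h1 := vA k i hk hi
    have h2 := vA k j hk hj
    rcases h1 with h1|h1 <;> rcases h2 with h2|h2 <;> omega
  · intro i j hi hj h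
    have h1 := dA k hk i hi
    have h2 := dA k hk j hj
    rcases h1 with h1|h1|h1|h1 <;> rcases h2 with h2|h2|h2|h2 <;> omega
  · have h1 := dA k hk (k - 2) (by omega)
    rcases h1 with h1|h1|h1|h1 <;> omega
  · intro j hj habs
    rw [abs_eq (by norm_num)] at habs
    have h1 := dA k hk j hj
    rcases h1 with h1|h1|h1|h1 <;> omega

set_option maxHeartbeats 1000000 in
lemma caseB (k : ℕ) (hk : 5 ≤ k) (hB : k % 4 = 0 ∨ k % 4 = 3) :
    ∃ f : Fin k → ℤ, IsGdlOn (circuitArcs k (Nat.lt_of_lt_of_le (Nat.succ_pos 4) hk)) f ∧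
      ∃! i : Fin k, |f (cyc k (Nat.lt_of_lt_of_le (Nat.succ_pos 4) hk) i) - f i| = 1 := by
  refine build hk (FB k) ?_ ?_ ?_ (k - 4) (by omega) ?_ ?_
  · intro i hi
    have h1 := vB k i hk hi
    rcases h1 with h1|h1|h1|h1|h1|h1 <;> omega
  · intro i j hi hj h
    have h1 := vB k i hk hi
    have h2 := vB k j hk hj
    rcases h1 with h1|h1|h1|h1|h1|h1 <;> rcases h2 with h2|h2|h2|h2|h2|h2 <;> omega
  · intro i j hi hj h
    have h1 := dB k hk i hi
    have h2 := dB k hk j hj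
    rcases h1 with h1|h1|h1|h1|h1|h1|h1|h1 <;>
      rcases h2 with h2|h2|h2|h2|h2|h2|h2|h2 <;> omega
  · have h1 := dB k hk (k - 4) (by omega)
    rcases h1 with h1|h1|h1|h1|h1|h1|h1|h1 <;> omega
  · intro j hj habs
    rw [abs_eq (by norm_num)] at habs
    have h1 := dB k hk j hj
    rcases h1 with h1|h1|h1|h1|h1|h1|h1|h1 <;> omega

theorem stmt_5 (k : ℕ) (hk : 5 ≤ k) :
    ∃ f : Fin k → ℤ, IsGdlOn (circuitArcs k (by omega)) f ∧
      ∃! i : Fin k, |f (cyc k (by omega) i) - f i| = 1 := by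
  by_cases hA : k % 4 = 1 ∨ k % 4 = 2
  · exact caseA k hk hA
  · exact caseB k hk (by omega)
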